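/- Let g_η(r) := (1/η)(1 - r^η) - (1 - r) for η ∈ (0,1) and r > 0, and let g_0(r) := -log r - (1 - r). Then for any 0 < η < 1 and V > 1, and all r with 1/V ≤ r, one has g_0(r) ≤ C · g_η(r), where C = ((η/(1-η)) log V + 1/(1-η)). -/

import Mathlib

open Real

private lemma wamgm {η : ℝ} (hη0 : 0 ≤ η) (hη1 : η ≤ 1) (u : ℝ) :
    Real.exp (η * u) ≤ η * Real.exp u + (1 - η) := by
  have h := convexOn_exp.2 (Set.mem_univ u) (Set.mem_univ (0 : ℝ)) hη0
    (by linarith : (0:ℝ) ≤ 1 - η) (by ring)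
  simpa using h

private lemma geta_nonneg {η : ℝ} (hη0 : 0 < η) (hη1 : η < 1) (u : ℝ) :
    0 ≤ (1/η) * (1 - Real.exp (η * u)) - (1 - Real.exp u) := by
  have h := wamgm hη0.le hη1.le u
  have h2 : η * (1 - Real.exp u) ≤ 1 - Real.exp (η * u) := by linarith
  have h3 : (1 - Real.exp u) ≤ (1/η) * (1 - Real.exp (η * u)) := by
    rw [div_mul_eq_mul_div, le_div_iff₀ hη0]; linarith
  linarith

/-- Case `r ≥ 1` (u = log r ≥ 0): `(1-η) g₀ ≤ g_η`. -/
private lemma lemB {η : ℝ} (hη0 : 0 < η) (hη1 : η < 1) {u : ℝ} (hu : 0 ≤ u) :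
    (1 - η) * (Real.exp u - u - 1)
      ≤ (1/η) * (1 - Real.exp (η * u)) - (1 - Real.exp u) := by
  set Ψ : ℝ → ℝ := fun x =>
    (1 - Real.exp (η * x)) - η * (1 - Real.exp x) - η * (1 - η) * (Real.exp x - x - 1) with hΨ
  have hd : ∀ x : ℝ, HasDerivAt Ψ
      (η * (η * Real.exp x + (1 - η) - Real.exp (η * x))) x := by
    intro x
    have h1 : HasDerivAt (fun x : ℝ => Real.exp (η * x)) (Real.exp (η * x) * η) x := by
      simpa using ((hasDerivAt_id x).const_mul η).exp
    have h2 : HasDerivAt Real.exp (Real.exp x) x := Real.hasDerivAt_exp x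
    have := (((hasDerivAt_const x (1:ℝ)).sub h1).sub
        (((hasDerivAt_const x (1:ℝ)).sub h2).const_mul η)).sub
        (((h2.sub (hasDerivAt_id x)).sub_const 1).const_mul (η * (1 - η)))
    convert this using 1
    · rfl
    · rfl
    · rfl
    ring
  have hmono : MonotoneOn Ψ (Set.Ici (0:ℝ)) := by
    apply monotoneOn_of_deriv_nonneg (convex_Ici 0)
    · exact fun x _ => ((hd x).continuousAt).continuousWithinAt
    · exact fun x _ => ((hd x).differentiableAt).differentiableWithinAt
    · intro x _
      rw [(hd x).deriv]
      have := wamgm hη0.le hη1.le x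
      nlinarith [hη0]
  have h0 : Ψ 0 ≤ Ψ u := hmono (Set.self_mem_Ici) hu hu
  have hΨ0 : Ψ 0 = 0 := by simp [hΨ]
  have hΨu : 0 ≤ Ψ u := by linarith
  rw [hΨ] at hΨu
  simp only at hΨu
  have hinv : η * ((1/η) * (1 - Real.exp (η * u))) = 1 - Real.exp (η * u) := by
    field_simp
  nlinarith [hΨu, hinv, hη0]

/-- Case `r ≤ 1` (v = -log r ≥ 0): `η(1-η) g₀ ≤ (ηv+1)·(η g_η)`. -/
private lemma lemA {η : ℝ} (hη0 : 0 < η) (hη1 : η < 1) {v : ℝ} (hv : 0 ≤ v) :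
    η * (1 - η) * (v - 1 + Real.exp (-v))
      ≤ (η * v + 1) * ((1 - Real.exp (-(η * v))) - η * (1 - Real.exp (-v))) := by
  set Φ : ℝ → ℝ := fun x =>
    (η * x + 1) * ((1 - Real.exp (-(η * x))) - η * (1 - Real.exp (-x)))
      - η * (1 - η) * (x - 1 + Real.exp (-x)) with hΦ
  have hd : ∀ x : ℝ, HasDerivAt Φ
      (η ^ 2 * x * (Real.exp (-(η * x)) - Real.exp (-x))) x := by
    intro x
    have h1 : HasDerivAt (fun x : ℝ => Real.exp (-(η * x)))
        (Real.exp (-(η * x)) * (-η)) x := by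
      have : HasDerivAt (fun x : ℝ => -(η * x)) (-η) x := by
        exact ((hasDerivAt_id' x).const_mul η).neg.congr_deriv (by ring)
      exact this.exp
    have h2 : HasDerivAt (fun x : ℝ => Real.exp (-x)) (Real.exp (-x) * (-1)) x := by
      have : HasDerivAt (fun x : ℝ => -x) (-1) x := (hasDerivAt_id x).neg
      exact this.exp
    have hlin : HasDerivAt (fun x : ℝ => η * x + 1) η x := by
      simpa using ((hasDerivAt_id x).const_mul η).add_const 1
    have hin : HasDerivAt
        (fun x : ℝ => (1 - Real.exp (-(η * x))) - η * (1 - Real.exp (-x)))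
        ((Real.exp (-(η * x)) * η) - η * (Real.exp (-x)))  x := by
      have := ((hasDerivAt_const x (1:ℝ)).sub h1).sub
        (((hasDerivAt_const x (1:ℝ)).sub h2).const_mul η)
      convert this using 1
      · rfl
      · rfl
      · rfl
      ring
    have hlast : HasDerivAt (fun x : ℝ => x - 1 + Real.exp (-x))
        (1 + Real.exp (-x) * (-1)) x := by
      exact ((hasDerivAt_id' x).sub_const 1).add h2
    have := (hlin.mul hin).sub (hlast.const_mul (η * (1 - η)))
    convert this using 1
    · rfl
    · rfl
    · rfl
    ring
  have hmono : MonotoneOn Φ (Set.Ici (0:ℝ)) := by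
    apply monotoneOn_of_deriv_nonneg (convex_Ici 0)
    · exact fun x _ => ((hd x).continuousAt).continuousWithinAt
    · exact fun x _ => ((hd x).differentiableAt).differentiableWithinAt
    · intro x hx
      rw [(hd x).deriv]
      rw [interior_Ici] at hx
      have hx0 : 0 < x := hx
      have hexp : Real.exp (-x) ≤ Real.exp (-(η * x)) := by
        apply Real.exp_le_exp.2
        nlinarith
      have hpos : 0 ≤ Real.exp (-(η * x)) - Real.exp (-x) := by linarith
      exact mul_nonneg (mul_nonneg (by positivity) hx0.le) hpos
  have h0 : Φ 0 ≤ Φ v := hmono (Set.self_mem_Ici) hv hv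
  have hΦ0 : Φ 0 = 0 := by simp [hΦ]
  have h1 : 0 ≤ Φ v := by linarith
  rw [hΦ] at h1
  simp only at h1
  linarith

/-- With `g_η(r) = (1/η)(1 - r^η) - (1 - r)` and `g_0(r) = -log r - (1 - r)`:
for `0 < η < 1`, `V > 1` and `1/V ≤ r`, one has
`g_0(r) ≤ ((η/(1-η)) log V + 1/(1-η)) · g_η(r)`. -/
theorem g_zero_le_const_mul_g_eta
    {η V r : ℝ} (hη0 : 0 < η) (hη1 : η < 1) (hV : 1 < V) (hr : 1 / V ≤ r) :
    -Real.log r - (1 - r)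
      ≤ ((η / (1 - η)) * Real.log V + 1 / (1 - η))
        * ((1/η) * (1 - r ^ η) - (1 - r)) := by
  have hη' : (0:ℝ) < 1 - η := by linarith
  have hV0 : (0:ℝ) < V := by linarith
  have hr0 : 0 < r := lt_of_lt_of_le (by positivity) hr
  have hlogV : 0 < Real.log V := Real.log_pos hV
  have hlogr : -Real.log V ≤ Real.log r := by
    have := Real.log_le_log (by positivity) hr
    rwa [one_div, Real.log_inv] at this
  have hrpow : r ^ η = Real.exp (η * Real.log r) := by
    rw [Real.rpow_def_of_pos hr0, mul_comm]
  have hrexp : Real.exp (Real.log r) = r := Real.exp_log hr0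
  have hC : (η / (1 - η)) * Real.log V + 1 / (1 - η)
      = (η * Real.log V + 1) / (1 - η) := by ring
  rw [hC, div_mul_eq_mul_div, le_div_iff₀ hη']
  -- goal: (-log r - (1 - r)) * (1 - η) ≤ (η * log V + 1) * g_η r
  have hge : 0 ≤ (1/η) * (1 - r ^ η) - (1 - r) := by
    have := geta_nonneg hη0 hη1 (Real.log r)
    rw [hrexp, ← hrpow] at this
    exact this
  rcases le_or_gt 0 (Real.log r) with h | h
  · -- r ≥ 1
    have hB := lemB hη0 hη1 h
    rw [hrexp, ← hrpow] at hB
    nlinarith [mul_nonneg (mul_nonneg hη0.le hlogV.le) hge]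
  · -- r < 1 : set v = -log r
    set v := -Real.log r with hv
    have hv0 : 0 ≤ v := by simp [hv]; linarith
    have hvV : v ≤ Real.log V := by simp [hv]; linarith
    have hA := lemA hη0 hη1 hv0
    have he1 : Real.exp (-v) = r := by rw [hv, neg_neg, hrexp]
    have he2 : Real.exp (-(η * v)) = r ^ η := by
      rw [hrpow, hv]; ring_nf
    rw [he1, he2] at hA
    -- hA : η (1-η) (v - 1 + r) ≤ (ηv+1) (1 - r^η - η(1-r))
    have hgη : (1 - r ^ η) - η * (1 - r) = η * ((1/η) * (1 - r ^ η) - (1 - r)) := by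
      field_simp
    rw [hgη] at hA
    have hstep : (η * v + 1) * (η * ((1/η) * (1 - r ^ η) - (1 - r)))
        ≤ (η * Real.log V + 1) * (η * ((1/η) * (1 - r ^ η) - (1 - r))) := by
      have hd : 0 ≤ Real.log V - v := by linarith
      nlinarith [mul_nonneg (mul_nonneg hη0.le hd) (mul_nonneg hη0.le hge)]
    have hg0 : -Real.log r - (1 - r) = v - 1 + r := by rw [hv]; ring
    rw [hg0]
    have := le_trans hA hstep
    nlinarith [this]
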